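/- Let A be a finite idempotent algebra, a,b ∈ A, B = Sg{a,b}, and θ a congruence of B. Let h be a ternary term operation of A such that h(h(x,y,y), y, y) = h(x,y,y) for all x,y ∈ A, and such that h(x,y,y) θ x and h(y,y,x) θ x for all x,y ∈ B. Then there exist b′ ∈ b^θ and a ternary term operation h′ of A such that h′(b′,a,a) = h′(a,a,b′) = b′. -/
import Mathlib


namespace UA

/-- Terms over a signature `(ι, ar)` with `n` variables. -/
inductive Term (ι : Type) (ar : ι → ℕ) (n : ℕ) : Type where
  | var : Fin n → Term ι ar n
  | app : (i : ι) → (Fin (ar i) → Term ι ar n) → Term ι ar n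

/-- Evaluation of a term in an algebra with operations `ops`. -/
def Term.eval {ι : Type} {ar : ι → ℕ} {A : Type} (ops : ∀ i : ι, (Fin (ar i) → A) → A)
    {n : ℕ} : Term ι ar n → (Fin n → A) → A
  | .var j, x => x j
  | .app i ts, x => ops i fun k => Term.eval ops (ts k) x

variable {ι : Type} {ar : ι → ℕ} {A : Type}

/-- An algebra is idempotent if every basic operation is. -/
def Idempotent (ops : ∀ i : ι, (Fin (ar i) → A) → A) : Prop :=
  ∀ (i : ι) (x : A), ops i (fun _ => x) = x

/-- A subuniverse: a subset closed under all basic operations. -/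
def IsSubuniverse (ops : ∀ i : ι, (Fin (ar i) → A) → A) (S : Set A) : Prop :=
  ∀ (i : ι) (xs : Fin (ar i) → A), (∀ k, xs k ∈ S) → ops i xs ∈ S

/-- The subuniverse generated by `X`. -/
def Sg (ops : ∀ i : ι, (Fin (ar i) → A) → A) (X : Set A) : Set A :=
  ⋂₀ {S | IsSubuniverse ops S ∧ X ⊆ S}

/-- A tolerance: a reflexive symmetric compatible binary relation. -/
def IsTolerance (ops : ∀ i : ι, (Fin (ar i) → A) → A) (τ : A → A → Prop) : Prop :=
  (∀ x, τ x x) ∧ (∀ x y, τ x y → τ y x) ∧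
  ∀ (i : ι) (xs ys : Fin (ar i) → A), (∀ k, τ (xs k) (ys k)) → τ (ops i xs) (ops i ys)

/-- A congruence: a compatible equivalence relation. -/
def IsCongruence (ops : ∀ i : ι, (Fin (ar i) → A) → A) (θ : A → A → Prop) : Prop :=
  Equivalence θ ∧
  ∀ (i : ι) (xs ys : Fin (ar i) → A), (∀ k, θ (xs k) (ys k)) → θ (ops i xs) (ops i ys)

/-- A congruence of the subalgebra with universe `B`, viewed as a partial
equivalence relation on the big algebra whose domain is exactly `B` and which is
compatible with all operations. -/
def IsCongruenceOn (ops : ∀ i : ι, (Fin (ar i) → A) → A) (B : Set A)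
    (θ : A → A → Prop) : Prop :=
  (∀ x y, θ x y → x ∈ B ∧ y ∈ B) ∧
  (∀ x ∈ B, θ x x) ∧
  (∀ x y, θ x y → θ y x) ∧
  (∀ x y z, θ x y → θ y z → θ x z) ∧
  ∀ (i : ι) (xs ys : Fin (ar i) → A), (∀ k, θ (xs k) (ys k)) → θ (ops i xs) (ops i ys)

/-- `f` is a binary term operation of the algebra. -/
def IsTermOp2 (ops : ∀ i : ι, (Fin (ar i) → A) → A) (f : A → A → A) : Prop :=
  ∃ t : Term ι ar 2, ∀ x y, f x y = t.eval ops ![x, y]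

/-- `g` is a ternary term operation of the algebra. -/
def IsTermOp3 (ops : ∀ i : ι, (Fin (ar i) → A) → A) (g : A → A → A → A) : Prop :=
  ∃ t : Term ι ar 3, ∀ x y z, g x y z = t.eval ops ![x, y, z]

/-- Connectivity of `a` and `b` in the hypergraph `H(A)` whose hyperedges are the
nonempty proper subuniverses: a chain of hyperedges with consecutive ones
intersecting, the first containing `a`, the last containing `b`. -/
def HConnected (ops : ∀ i : ι, (Fin (ar i) → A) → A) (a b : A) : Prop :=
  ∃ L : List (Set A),
    (∀ S ∈ L, IsSubuniverse ops S ∧ S.Nonempty ∧ S ≠ Set.univ) ∧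
    L.Chain' (fun S T => (S ∩ T).Nonempty) ∧
    ∃ h : L ≠ [], a ∈ L.head h ∧ b ∈ L.getLast h


/-- Substitution of terms into a term. -/
def Term.subst {n m : ℕ} : Term ι ar n → (Fin n → Term ι ar m) → Term ι ar m
  | .var j, σ => σ j
  | .app i ts, σ => .app i (fun k => (ts k).subst σ)

theorem Term.eval_subst (ops : ∀ i : ι, (Fin (ar i) → A) → A) {n m : ℕ}
    (t : Term ι ar n) (σ : Fin n → Term ι ar m) (x : Fin m → A) :
    (t.subst σ).eval ops x = t.eval ops (fun j => (σ j).eval ops x) := by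
  induction t with
  | var j => rfl
  | app i ts ih => simp only [Term.subst, Term.eval, ih]

theorem Term.eval_const {ops : ∀ i : ι, (Fin (ar i) → A) → A}
    (hidem : Idempotent ops) {n : ℕ} (t : Term ι ar n) (x : A) :
    t.eval ops (fun _ => x) = x := by
  induction t with
  | var j => rfl
  | app i ts ih => simp only [Term.eval, ih]; exact hidem i x

theorem IsTermOp3.comp {ops : ∀ i : ι, (Fin (ar i) → A) → A}
    {g g1 g2 g3 : A → A → A → A} (hg : IsTermOp3 ops g) (h1 : IsTermOp3 ops g1)
    (h2 : IsTermOp3 ops g2) (h3 : IsTermOp3 ops g3) :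
    IsTermOp3 ops (fun x y z => g (g1 x y z) (g2 x y z) (g3 x y z)) := by
  obtain ⟨t, ht⟩ := hg
  obtain ⟨t1, ht1⟩ := h1
  obtain ⟨t2, ht2⟩ := h2
  obtain ⟨t3, ht3⟩ := h3
  refine ⟨t.subst ![t1, t2, t3], fun x y z => ?_⟩
  show g (g1 x y z) (g2 x y z) (g3 x y z) = _
  rw [Term.eval_subst, ht]
  congr 1
  funext j
  fin_cases j <;> simp [ht1, ht2, ht3]

theorem IsTermOp3.proj1 (ops : ∀ i : ι, (Fin (ar i) → A) → A) :
    IsTermOp3 ops (fun x _ _ => x) :=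
  ⟨.var 0, fun x y z => by simp [Term.eval]⟩

theorem IsTermOp3.proj2 (ops : ∀ i : ι, (Fin (ar i) → A) → A) :
    IsTermOp3 ops (fun _ y _ => y) :=
  ⟨.var 1, fun x y z => by simp [Term.eval]⟩

theorem IsTermOp3.proj3 (ops : ∀ i : ι, (Fin (ar i) → A) → A) :
    IsTermOp3 ops (fun _ _ z => z) :=
  ⟨.var 2, fun x y z => by simp [Term.eval]⟩

theorem IsTermOp3.idem {ops : ∀ i : ι, (Fin (ar i) → A) → A}
    (hidem : Idempotent ops) {g : A → A → A → A} (hg : IsTermOp3 ops g) (x : A) :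
    g x x x = x := by
  obtain ⟨t, ht⟩ := hg
  rw [ht]
  have hx : ![x, x, x] = fun _ : Fin 3 => x := by funext j; fin_cases j <;> rfl
  rw [hx, Term.eval_const hidem]

theorem Sg.isSubuniverse (ops : ∀ i : ι, (Fin (ar i) → A) → A) (X : Set A) :
    IsSubuniverse ops (Sg ops X) := by
  intro i xs hxs S hS
  exact hS.1 i xs (fun k => hxs k S hS)

theorem Sg.subset (ops : ∀ i : ι, (Fin (ar i) → A) → A) (X : Set A) :
    X ⊆ Sg ops X :=
  fun x hx S hS => hS.2 hx

theorem IsTermOp3.mem {ops : ∀ i : ι, (Fin (ar i) → A) → A} {B : Set A}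
    (hB : IsSubuniverse ops B) {g : A → A → A → A} (hg : IsTermOp3 ops g)
    {x y z : A} (hx : x ∈ B) (hy : y ∈ B) (hz : z ∈ B) : g x y z ∈ B := by
  obtain ⟨t, ht⟩ := hg
  rw [ht]
  have key : ∀ {n : ℕ} (t : Term ι ar n) (v : Fin n → A), (∀ j, v j ∈ B) →
      t.eval ops v ∈ B := by
    intro n t
    induction t with
    | var j => exact fun v hv => hv j
    | app i ts ih => exact fun v hv => hB i _ (fun k => ih k v hv)
  refine key t _ (fun j => ?_)
  fin_cases j <;> assumption

/-- Iterated modification of a ternary term `h`: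
`iterM h 0 x y z = h (h x y z) y y` and
`iterM h (j+1) x y z = h (h x y (iterM h j y y z)) y y`. -/
def iterM (h : A → A → A → A) : ℕ → A → A → A → A
  | 0 => fun x y z => h (h x y z) y y
  | j + 1 => fun x y z => h (h x y (iterM h j y y z)) y y

theorem iterM_isTermOp3 {ops : ∀ i : ι, (Fin (ar i) → A) → A}
    {h : A → A → A → A} (hh : IsTermOp3 ops h) (j : ℕ) :
    IsTermOp3 ops (iterM h j) := by
  induction j with
  | zero =>
    simp only [iterM]
    exact IsTermOp3.comp hh (IsTermOp3.comp hh (.proj1 ops) (.proj2 ops) (.proj3 ops))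
      (.proj2 ops) (.proj2 ops)
  | succ j ih =>
    simp only [iterM]
    exact IsTermOp3.comp hh
      (IsTermOp3.comp hh (.proj1 ops) (.proj2 ops)
        (IsTermOp3.comp ih (.proj2 ops) (.proj2 ops) (.proj3 ops)))
      (.proj2 ops) (.proj2 ops)

/-- an affine edge yields a thin affine edge: there are
`b' ∈ b^θ` and a ternary term operation `h'` with `h'(b',a,a) = h'(a,a,b') = b'`. -/
theorem stmt_15 {ι : Type} {ar : ι → ℕ} {A : Type} [Fintype A] [Nonempty A]
    (ops : ∀ i : ι, (Fin (ar i) → A) → A)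
    (hidem : Idempotent ops)
    (a b : A) (θ : A → A → Prop)
    (hθ : IsCongruenceOn ops (Sg ops ({a, b} : Set A)) θ)
    (h : A → A → A → A) (hh : IsTermOp3 ops h)
    (hlaw : ∀ x y : A, h (h x y y) y y = h x y y)
    (haff : ∀ x ∈ Sg ops ({a, b} : Set A), ∀ y ∈ Sg ops ({a, b} : Set A),
      θ (h x y y) x ∧ θ (h y y x) x) :
    ∃ b', θ b b' ∧ ∃ h' : A → A → A → A, IsTermOp3 ops h' ∧
      h' b' a a = b' ∧ h' a a b' = b' := by
  set B := Sg ops ({a, b} : Set A) with hBdef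
  have hBsub : IsSubuniverse ops B := Sg.isSubuniverse ops _
  have haB : a ∈ B := Sg.subset ops _ (by simp)
  have hbB : b ∈ B := Sg.subset ops _ (by simp)
  obtain ⟨hdom, hrefl, hsymm, htrans, hcomp⟩ := hθ
  have haaa : h a a a = a := IsTermOp3.idem hidem hh a
  set φ : A → A := fun x => h (h a a x) a a with hφdef
  -- the chain b, φ b, φ² b, ... stays in B and in the θ-class of b
  have hchain : ∀ k, φ^[k] b ∈ B ∧ θ b (φ^[k] b) := by
    intro k
    induction k with
    | zero => exact ⟨hbB, hrefl b hbB⟩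
    | succ k ih =>
      obtain ⟨hwB, hθw⟩ := ih
      set w := φ^[k] b
      have hfwB : h a a w ∈ B := IsTermOp3.mem hBsub hh haB haB hwB
      have h1 : θ (h a a w) w := (haff w hwB a haB).2
      have h2 : θ (h (h a a w) a a) (h a a w) := (haff (h a a w) hfwB a haB).1
      have hstep : φ^[k + 1] b = φ w := Function.iterate_succ_apply' φ k b
      refine ⟨?_, ?_⟩
      · rw [hstep]
        exact IsTermOp3.mem hBsub hh hfwB haB haB
      · rw [hstep]
        exact htrans _ _ _ hθw (hsymm _ _ (htrans _ _ _ h2 h1))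
  -- pigeonhole: the sequence φ^[k+1] b repeats
  obtain ⟨i, j, hij, heq⟩ :=
    Fintype.exists_ne_map_eq_of_card_lt
      (fun k : Fin (Fintype.card A + 1) => φ^[(k : ℕ) + 1] b) (by simp)
  -- wlog i < j
  obtain ⟨i, j, hlt, heq⟩ : ∃ i j : ℕ, i < j ∧ φ^[i + 1] b = φ^[j + 1] b := by
    rcases lt_or_gt_of_ne hij with hc | hc
    · exact ⟨i, j, hc, heq⟩
    · exact ⟨j, i, hc, heq.symm⟩
  set d := φ^[i + 1] b with hd
  set p := j - i with hp
  have hp1 : 1 ≤ p := by omega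
  -- d is a fixed point of φ^[p]
  have hfix : φ^[p] d = d := by
    rw [hd, ← Function.iterate_add_apply]
    have : p + (i + 1) = j + 1 := by omega
    rw [this, ← heq]
  -- e d = d, where e x = h x a a
  have hed : h d a a = d := by
    have : d = φ (φ^[i] b) := Function.iterate_succ_apply' φ i b
    rw [this]
    exact hlaw (h a a (φ^[i] b)) a
  refine ⟨d, (hchain (i + 1)).2, iterM h (p - 1), iterM_isTermOp3 hh (p - 1), ?_, ?_⟩
  · -- iterM h (p-1) d a a = h d a a = d
    have key : ∀ m x, iterM h m x a a = h x a a := by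
      intro m
      induction m with
      | zero => exact fun x => hlaw x a
      | succ m ih =>
        intro x
        have : iterM h m a a a = a := IsTermOp3.idem hidem (iterM_isTermOp3 hh m) a
        show h (h x a (iterM h m a a a)) a a = h x a a
        rw [this]
        exact hlaw x a
    rw [key, hed]
  · -- iterM h (p-1) a a d = φ^[p] d = d
    have key : ∀ m z, iterM h m a a z = φ^[m + 1] z := by
      intro m
      induction m with
      | zero => intro z; rfl
      | succ m ih =>
        intro z
        show h (h a a (iterM h m a a z)) a a = φ^[m + 1 + 1] z
        rw [ih z, Function.iterate_succ_apply' φ (m + 1) z]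
    rw [key]
    have : p - 1 + 1 = p := Nat.succ_pred_eq_of_pos hp1
    rw [this, hfix]

end UA
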